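/- In the scale context, if J is θ-complete, ζ ≤ θ is a limit ordinal, and λ = κ^{+ζ}, then S^bd = ∅. -/

import Mathlib

open Cardinal Set

noncomputable section

/-- The `β`-th iterated cardinal successor of `χ`. -/
noncomputable def succIter (χ : Cardinal.{0}) (β : Ordinal.{0}) : Cardinal :=
  Ordinal.limitRecOn β χ (fun _ ih => Order.succ ih)
    (fun β _ ih => ⨆ γ : Iio β, ih γ.1 γ.2)

/-- `J` is a proper ideal on `{i : i < κ}`. -/
structure IsIdealOn (κ : Ordinal.{0}) (J : Set (Set Ordinal)) : Prop where
  subset_mem : ∀ s ∈ J, s ⊆ Iio κ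
  empty_mem : ∅ ∈ J
  mono : ∀ s ∈ J, ∀ t ⊆ s, t ∈ J
  union_mem : ∀ s ∈ J, ∀ t ∈ J, s ∪ t ∈ J
  proper : Iio κ ∉ J

/-- The ideal of bounded subsets of `κ`. -/
def boundedIdeal (κ : Ordinal.{0}) : Set (Set Ordinal) := {s | ∃ j < κ, s ⊆ Iio j}

/-- `J` is `θ`-complete: closed under unions of fewer than `θ` of its members. -/
def IsCompleteIdeal (θ : Cardinal.{0}) (J : Set (Set Ordinal)) : Prop :=
  ∀ S : Set (Set Ordinal), S ⊆ J → #S < Cardinal.lift.{1,0} θ → ⋃₀ S ∈ J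

/-- `f <_J g` : `{i < κ : f i ≥ g i} ∈ J`. -/
def ltMod (κ : Ordinal.{0}) (J : Set (Set Ordinal)) (f g : Ordinal → Ordinal) : Prop :=
  {i | i < κ ∧ g i ≤ f i} ∈ J

/-- `h` is a `<_J`-exact upper bound of `⟨f α : α < δ⟩`. -/
def IsEub (κ : Ordinal.{0}) (J : Set (Set Ordinal)) (δ : Ordinal.{0})
    (f : Ordinal → Ordinal → Ordinal) (h : Ordinal → Ordinal) : Prop :=
  (∀ α < δ, ltMod κ J (f α) h) ∧
    ∀ g : Ordinal → Ordinal, ltMod κ J g h → ∃ α < δ, ltMod κ J g (f α)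

/-- `D` is an ultrafilter on `{i : i < κ}`. -/
structure IsUltrafilterOn (κ : Ordinal.{0}) (D : Set (Set Ordinal)) : Prop where
  subset_mem : ∀ s ∈ D, s ⊆ Iio κ
  inter_mem : ∀ s ∈ D, ∀ t ∈ D, s ∩ t ∈ D
  superset_mem : ∀ s ∈ D, ∀ t, t ⊆ Iio κ → s ⊆ t → t ∈ D
  empty_not_mem : ∅ ∉ D
  ultra : ∀ s, s ⊆ Iio κ → s ∈ D ∨ Iio κ \ s ∈ D

/-- `f <_D g` : `{i < κ : f i < g i} ∈ D`. -/
def ltModD (κ : Ordinal.{0}) (D : Set (Set Ordinal)) (f g : Ordinal → Ordinal) : Prop :=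
  {i | i < κ ∧ f i < g i} ∈ D

/-- `δ` is a good point for the sequence `f` (with respect to the ideal `J` on `κ`). -/
def IsGoodPt (κ : Ordinal.{0}) (J : Set (Set Ordinal)) (f : Ordinal → Ordinal → Ordinal)
    (δ : Ordinal.{0}) : Prop :=
  ∃ A : Set Ordinal, A ⊆ Iio δ ∧ (∀ β < δ, ∃ α ∈ A, β < α) ∧
    ∃ s : Ordinal → Set Ordinal, (∀ α ∈ A, s α ∈ J) ∧
      ∀ i < κ, ∀ α ∈ A, ∀ β ∈ A, α < β → i ∉ s α → i ∉ s β → f α i < f β i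

/-- `δ` is a weakly good point for `f`. -/
def IsWeaklyGoodPt (κ : Ordinal.{0}) (J : Set (Set Ordinal)) (f : Ordinal → Ordinal → Ordinal)
    (δ : Ordinal.{0}) : Prop :=
  ∃ t : Set Ordinal, t ⊆ Iio κ ∧ t ∉ J ∧
    ∃ A : Set Ordinal, A ⊆ Iio δ ∧ (∀ β < δ, ∃ α ∈ A, β < α) ∧
      ∃ s : Ordinal → Set Ordinal, (∀ α ∈ A, s α ∈ J) ∧
        ∀ i ∈ t, ∀ α ∈ A, ∀ β ∈ A, α < β → i ∉ s α → i ∉ s β → f α i < f β i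

/-- `δ` is a chaotic point for `f`. -/
def IsChaoticPt (κ : Ordinal.{0}) (J : Set (Set Ordinal)) (f : Ordinal → Ordinal → Ordinal)
    (δ : Ordinal.{0}) : Prop :=
  (∃ D : Set (Set Ordinal), IsUltrafilterOn κ D ∧ (∀ s ∈ J, s ∉ D) ∧
    ∃ a : Ordinal → Set Ordinal, (∀ i < κ, #(a i) ≤ Cardinal.lift.{1,0} κ.card) ∧
      ∀ α < δ, ∃ β, α < β ∧ β < δ ∧ ∃ g : Ordinal → Ordinal,
        (∀ i < κ, g i ∈ a i) ∧ ltModD κ D (f α) g ∧ ltModD κ D g (f β)) ∨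
  (∃ A : Set Ordinal, A ⊆ Iio δ ∧ (∀ β < δ, ∃ α ∈ A, β < α) ∧
    ∃ g : Ordinal → Ordinal, ∀ α ∈ A, ∀ β ∈ A, α < β →
      {i | i < κ ∧ f β i ≤ g i} \ {i | i < κ ∧ f α i ≤ g i} ∈ J ∧
      {i | i < κ ∧ f α i ≤ g i} \ {i | i < κ ∧ f β i ≤ g i} ∉ J)

/-- The set of good points `δ < λ⁺` with `κ < cf δ < λ`. -/
def Sgd (κ lam : Cardinal.{0}) (J : Set (Set Ordinal)) (f : Ordinal → Ordinal → Ordinal) :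
    Set Ordinal :=
  {δ | δ < (Order.succ lam).ord ∧ Order.IsSuccLimit δ ∧ κ < δ.cof ∧ δ.cof < lam ∧ IsGoodPt κ.ord J f δ}

/-- The set of bad points `δ < λ⁺` with `κ < cf δ < λ`. -/
def Sbd (κ lam : Cardinal.{0}) (J : Set (Set Ordinal)) (f : Ordinal → Ordinal → Ordinal) :
    Set Ordinal :=
  {δ | δ < (Order.succ lam).ord ∧ Order.IsSuccLimit δ ∧ κ < δ.cof ∧ δ.cof < lam ∧
    (∃ h : Ordinal → Ordinal, IsEub κ.ord J δ f h ∧ {i | i < κ.ord ∧ (h i).cof ≤ κ} ∈ J) ∧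
    ¬ IsGoodPt κ.ord J f δ}

/-- The set of chaotic points `δ < λ⁺` with `κ < cf δ < λ`. -/
def Sch (κ lam : Cardinal.{0}) (J : Set (Set Ordinal)) (f : Ordinal → Ordinal → Ordinal) :
    Set Ordinal :=
  {δ | δ < (Order.succ lam).ord ∧ Order.IsSuccLimit δ ∧ κ < δ.cof ∧ δ.cof < lam ∧ IsChaoticPt κ.ord J f δ}

/-- `C` is a club (closed unbounded) subset of `δ`. -/
def IsClubIn (C : Set Ordinal) (δ : Ordinal.{0}) : Prop :=
  C ⊆ Iio δ ∧ (∀ α < δ, ∃ β ∈ C, α < β) ∧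
    ∀ α < δ, 0 < α → (∀ β < α, ∃ γ ∈ C, β < γ ∧ γ < α) → α ∈ C

/-- `S` is stationary in `δ`. -/
def IsStationaryIn (S : Set Ordinal) (δ : Ordinal.{0}) : Prop :=
  ∀ C : Set Ordinal, IsClubIn C δ → (S ∩ C).Nonempty

/-- `(∏_{i<κ} θs i, <_J)` has true cofinality `σ`. -/
def HasTrueCofinality (κ : Ordinal.{0}) (J : Set (Set Ordinal)) (θs : Ordinal → Cardinal)
    (σ : Cardinal.{0}) : Prop :=
  σ.IsRegular ∧ ∃ g : Ordinal → Ordinal → Ordinal,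
    (∀ ξ < σ.ord, ∀ i < κ, g ξ i < (θs i).ord) ∧
    (∀ ξ < σ.ord, ∀ ξ' < σ.ord, ξ < ξ' → ltMod κ J (g ξ) (g ξ')) ∧
    ∀ h : Ordinal → Ordinal, (∀ i < κ, h i < (θs i).ord) → ∃ ξ < σ.ord, ltMod κ J h (g ξ)

/-- `S_{<θ}(X)` : the subsets of `X` of cardinality `< θ`. -/
def SetLt (θ : Cardinal.{0}) (X : Set Ordinal) : Set (Set Ordinal) :=
  {a | a ⊆ X ∧ #a < Cardinal.lift.{1,0} θ}

/-- `C` is a club in `S_{<θ}(X)` : cofinal and closed under unions of increasing chains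
of length `< θ`. -/
def IsClubInSetLt (θ : Cardinal.{0}) (X : Set Ordinal) (C : Set (Set Ordinal)) : Prop :=
  C ⊆ SetLt θ X ∧ (∀ a ∈ SetLt θ X, ∃ b ∈ C, a ⊆ b) ∧
    ∀ β : Ordinal, 0 < β → β < θ.ord → ∀ c : Ordinal → Set Ordinal,
      (∀ i < β, c i ∈ C) → (∀ i < β, ∀ j < β, i ≤ j → c i ⊆ c j) →
      (⋃ i ∈ Iio β, c i) ∈ C

/-- `S` is stationary in `S_{<θ}(X)`. -/
def IsStationaryInSetLt (θ : Cardinal.{0}) (X : Set Ordinal) (S : Set (Set Ordinal)) : Prop :=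
  ∀ C : Set (Set Ordinal), IsClubInSetLt θ X C → (S ∩ C).Nonempty

/-- `NPT(λ, θ)` : there is a family `⟨A i : i < λ⟩` of subsets of `λ`, each of cardinality
`≤ θ`, with no transversal, while every proper initial segment has a transversal. -/
def NPT (lam θ : Cardinal.{0}) : Prop :=
  ∃ A : Ordinal → Set Ordinal,
    (∀ i < lam.ord, A i ⊆ Iio lam.ord ∧ #(A i) ≤ Cardinal.lift.{1,0} θ) ∧
    (¬ ∃ F : Ordinal → Ordinal, (∀ i < lam.ord, F i ∈ A i) ∧ InjOn F (Iio lam.ord)) ∧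
    ∀ α < lam.ord, ∃ F : Ordinal → Ordinal, (∀ i < α, F i ∈ A i) ∧ InjOn F (Iio α)

end

-- AUX LEMMAS (to be inserted above statement9)

theorem succIter_zero (χ : Cardinal) : succIter χ 0 = χ :=
  Ordinal.limitRecOn_zero _ _ _

theorem succIter_succ (χ : Cardinal) (β : Ordinal) :
    succIter χ (Order.succ β) = Order.succ (succIter χ β) :=
  Ordinal.limitRecOn_succ _ _ _ _

theorem succIter_limit (χ : Cardinal) {β : Ordinal} (h : Order.IsSuccLimit β) :
    succIter χ β = ⨆ γ : Iio β, succIter χ γ.1 :=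
  Ordinal.limitRecOn_limit _ _ _ _ h

theorem succIter_strictMono (χ : Cardinal) : ∀ {β β' : Ordinal}, β < β' →
    succIter χ β < succIter χ β' := by
  intro β β'
  induction β' using Ordinal.limitRecOn with
  | zero => intro hβ; exact absurd hβ (zero_le : (0 : Ordinal) ≤ β).not_gt
  | add_one β' ih =>
    intro hβ
    rw [Ordinal.add_one_eq_succ] at hβ ⊢
    rcases lt_or_eq_of_le (Order.lt_succ_iff.1 hβ) with hlt | rfl
    · exact (ih hlt).trans_le (by rw [succIter_succ]; exact Order.le_succ _)
    · rw [succIter_succ]; exact Order.lt_succ _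
  | limit β' hβ' ih =>
    intro hβ
    have h2 : Order.succ β < β' := hβ'.succ_lt hβ
    refine (ih _ h2 (Order.lt_succ β)).trans_le ?_
    rw [succIter_limit χ hβ']
    exact le_ciSup (Cardinal.bddAbove_range _) (⟨Order.succ β, h2⟩ : Iio β')

theorem exists_eq_succIter {χ c : Cardinal} {β : Ordinal} (h1 : χ ≤ c)
    (h2 : c < succIter χ β) : ∃ ξ < β, c = succIter χ ξ := by
  classical
  have hne : {ξ : Ordinal | c < succIter χ ξ}.Nonempty := ⟨β, h2⟩
  set ξ0 := sInf {ξ : Ordinal | c < succIter χ ξ} with hξ0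
  have hmem : c < succIter χ ξ0 := csInf_mem hne
  have hmin : ∀ ξ < ξ0, ¬ c < succIter χ ξ := fun ξ hξ h => hξ.not_ge (csInf_le' h)
  have hξ0β : ξ0 ≤ β := csInf_le' h2
  rcases Ordinal.zero_or_succ_or_isSuccLimit ξ0 with h0 | ⟨a, ha⟩ | hlim
  · rw [h0, succIter_zero] at hmem
    exact absurd hmem h1.not_gt
  · have haξ0 : a < ξ0 := by rw [← ha]; exact Order.lt_succ a
    have h3 : succIter χ a ≤ c := le_of_not_gt (hmin a haξ0)
    have h4 : c ≤ succIter χ a := by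
      rw [← ha, succIter_succ] at hmem
      exact Order.le_of_lt_succ hmem
    exact ⟨a, haξ0.trans_le hξ0β, le_antisymm h4 h3⟩
  · exfalso
    rw [succIter_limit χ hlim] at hmem
    have : ∃ γ : Iio ξ0, c < succIter χ γ.1 := by
      by_contra hcon
      push_neg at hcon
      have : Nonempty (Iio ξ0) := ⟨⟨0, hlim.pos⟩⟩
      exact hmem.not_ge (ciSup_le fun γ => hcon γ)
    obtain ⟨⟨γ, hγ⟩, hcγ⟩ := this
    exact hmin γ hγ hcγ

noncomputable def fseq (a : Ordinal.{0}) : Ordinal.{0} → Ordinal.{0} := fun ν =>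
  if hν : ν < a.cof.ord then (Ordinal.exists_fundamental_sequence a).choose ν hν else 0

theorem fseq_lt (a : Ordinal) {ν : Ordinal} (hν : ν < a.cof.ord) : fseq a ν < a := by
  rw [fseq, dif_pos hν]
  exact (Ordinal.exists_fundamental_sequence a).choose_spec.lt hν

theorem fseq_strictMono (a : Ordinal) {ν ν' : Ordinal} (hν : ν < a.cof.ord)
    (hν' : ν' < a.cof.ord) (h : ν < ν') : fseq a ν < fseq a ν' := by
  simp only [fseq]
  rw [dif_pos hν, dif_pos hν']
  exact (Ordinal.exists_fundamental_sequence a).choose_spec.strict_mono hν hν' h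

theorem fseq_mono (a : Ordinal) {ν ν' : Ordinal} (hν : ν < a.cof.ord)
    (hν' : ν' < a.cof.ord) (h : ν ≤ ν') : fseq a ν ≤ fseq a ν' := by
  rcases lt_or_eq_of_le h with h | rfl
  · exact (fseq_strictMono a hν hν' h).le
  · rfl

theorem exists_fseq_ge (a : Ordinal) {x : Ordinal} (hx : x < a) :
    ∃ ν < a.cof.ord, x ≤ fseq a ν := by
  have hb := (Ordinal.exists_fundamental_sequence a).choose_spec.blsub_eq
  rw [← hb] at hx
  obtain ⟨ν, hν, hle⟩ := Ordinal.lt_blsub_iff.1 hx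
  exact ⟨ν, hν, by rwa [fseq, dif_pos hν]⟩

noncomputable def recD (F : (Ordinal.{0} → Ordinal.{0}) → Ordinal.{0} → Ordinal.{0}) :
    Ordinal.{0} → Ordinal.{0} :=
  WellFounded.fix Ordinal.lt_wf fun ε ih =>
    F (fun ε' => if hε' : ε' < ε then ih ε' hε' else 0) ε

theorem recD_eq (F : (Ordinal → Ordinal) → Ordinal → Ordinal) (ε : Ordinal) :
    recD F ε = F (fun ε' => if ε' < ε then recD F ε' else 0) ε := by
  rw [recD, WellFounded.fix_eq]
  congr 1

theorem bsup_ext {o : Ordinal.{0}} {f g : ∀ a < o, Ordinal.{0}}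
    (h : ∀ i hi, f i hi = g i hi) : Ordinal.bsup o f = Ordinal.bsup o g := by
  apply le_antisymm <;> apply Ordinal.bsup_le <;> intro i hi
  · rw [h i hi]; exact Ordinal.le_bsup _ _ _
  · rw [← h i hi]; exact Ordinal.le_bsup _ _ _

/-- Claim 1.9(3): if `J` is `θ`-complete, `ζ ≤ θ` is a limit ordinal and `λ = κ^{+ζ}`,
then there are no bad points. -/
theorem statement9
    (κ lam μ : Cardinal.{0}) (hκ : κ.IsRegular) (hκlam : κ < lam)
    (hcfl : lam.ord.cof = κ) (hμ : μ = Order.succ lam)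
    (J : Set (Set Ordinal.{0})) (hJ : IsIdealOn κ.ord J) (hJbd : boundedIdeal κ.ord ⊆ J)
    (lamSeq : Ordinal.{0} → Cardinal.{0})
    (hreg : ∀ i < κ.ord, (lamSeq i).IsRegular)
    (hgtκ : ∀ i < κ.ord, Order.succ κ < lamSeq i)
    (hmono : ∀ i < κ.ord, ∀ j < κ.ord, i < j → lamSeq i < lamSeq j)
    (hbelow : ∀ i < κ.ord, lamSeq i < lam)
    (hsupl : ∀ c < lam, ∃ i < κ.ord, c < lamSeq i)
    (f : Ordinal.{0} → Ordinal.{0} → Ordinal.{0})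
    (hf : ∀ α < μ.ord, ∀ i < κ.ord, f α i < (lamSeq i).ord)
    (hinc : ∀ α < μ.ord, ∀ β < μ.ord, α < β → ltMod κ.ord J (f α) (f β))
    (hcofinal : ∀ g : Ordinal.{0} → Ordinal.{0}, (∀ i < κ.ord, g i < (lamSeq i).ord) →
      ∃ α < μ.ord, ltMod κ.ord J g (f α))
    (θ : Cardinal.{0}) (hcomp : IsCompleteIdeal θ J)
    (ζ : Ordinal.{0}) (hζ : Order.IsSuccLimit ζ) (hζθ : ζ ≤ θ.ord)
    (hlamval : lam = succIter κ ζ) :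
    Sbd κ lam J f = ∅ := by
  classical
  subst hμ
  rw [Set.eq_empty_iff_forall_notMem]
  intro δ hδ
  obtain ⟨hδμ, hδlim, hcof1, hcof2, ⟨h, ⟨heubA, heubB⟩, hsmall⟩, hngood⟩ := hδ
  apply hngood
  -- basic facts
  have hκω : ℵ₀ ≤ κ := hκ.aleph0_le
  have hσreg : δ.cof.IsRegular := Cardinal.isRegular_cof hδlim
  have hσcof : δ.cof.ord.cof = δ.cof := hσreg.cof_eq
  have hσlim : Order.IsSuccLimit δ.cof.ord := Cardinal.isSuccLimit_ord (hκω.trans hcof1.le)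
  have hsucc1 : ∀ x : Ordinal, x < x + 1 := fun x => by
    rw [Ordinal.add_one_eq_succ]; exact Order.lt_succ x
  have hsuccσ : ∀ {x : Ordinal}, x < δ.cof.ord → x + 1 < δ.cof.ord := fun hx => by
    rw [Ordinal.add_one_eq_succ]; exact hσlim.succ_lt hx
  have hltμ : ∀ {x : Ordinal}, x < δ → x < (Order.succ lam).ord := fun hx => hx.trans hδμ
  have hIncJ : ∀ a b : Ordinal, a < δ → b < δ → a < b →
      {i | i < κ.ord ∧ f b i ≤ f a i} ∈ J := fun a b ha hb hab =>
    hinc a (hltμ ha) b (hltμ hb) hab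
  have hJ0 : {i | i < κ.ord ∧ h i ≤ f 0 i} ∈ J := heubA 0 hδlim.pos
  -- Claim B : coordinates with cofinality above δ.cof form a J-set
  have hZ1 : {i | i < κ.ord ∧ δ.cof < (h i).cof} ∈ J := by
    set Z1 := {i | i < κ.ord ∧ δ.cof < (h i).cof} with hZ1def
    have hpos : ∀ i ∈ Z1, 0 < h i := by
      intro i hi
      rcases eq_zero_or_pos (h i) with h0 | h0
      · have hi2 := hi.2
        rw [h0, Ordinal.cof_zero] at hi2
        exact absurd hi2 zero_le.not_gt
      · exact h0
    set g : Ordinal → Ordinal := fun i => if i ∈ Z1 then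
      Ordinal.bsup δ.cof.ord (fun ε _ => if f (fseq δ ε) i < h i then f (fseq δ ε) i else 0)
      else 0 with hgdef
    have hg_lt : ∀ i ∈ Z1, g i < h i := by
      intro i hi
      rw [hgdef]
      simp only [if_pos hi]
      apply Ordinal.bsup_lt_ord
      · rw [Cardinal.card_ord]; exact hi.2
      · intro ε hε
        by_cases hc : f (fseq δ ε) i < h i
        · rw [if_pos hc]; exact hc
        · rw [if_neg hc]; exact hpos i hi
    have hgh : ltMod κ.ord J g h := by
      refine hJ.mono _ hJ0 _ ?_
      rintro i ⟨hiκ, hile⟩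
      by_cases hc : i ∈ Z1
      · exact absurd hile (hg_lt i hc).not_ge
      · refine ⟨hiκ, ?_⟩
        rw [hgdef] at hile
        simp only [if_neg hc] at hile
        rw [nonpos_iff_eq_zero.1 hile]
        exact zero_le
    obtain ⟨a, haδ, ha⟩ := heubB g hgh
    obtain ⟨ν, hν, hle⟩ := exists_fseq_ge δ haδ
    have hν1 : ν + 1 < δ.cof.ord := hsuccσ hν
    set b := fseq δ (ν + 1) with hbdef
    have hab : a < b := hle.trans_lt (fseq_strictMono δ hν hν1 (hsucc1 ν))
    have hbδ : b < δ := fseq_lt δ hν1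
    have hE2 : {i | i < κ.ord ∧ f b i ≤ f a i} ∈ J := hIncJ a b haδ hbδ hab
    have hE3 : {i | i < κ.ord ∧ h i ≤ f b i} ∈ J := heubA b hbδ
    refine hJ.mono _ (hJ.union_mem _ ha _ (hJ.union_mem _ hE2 _ hE3)) _ ?_
    intro i hi
    by_contra hcon
    simp only [Set.mem_union, not_or] at hcon
    obtain ⟨h1, h2, h3⟩ := hcon
    have hiκ : i < κ.ord := hi.1
    have hga : g i < f a i := lt_of_not_ge fun hc => h1 ⟨hiκ, hc⟩
    have hba : f a i < f b i := lt_of_not_ge fun hc => h2 ⟨hiκ, hc⟩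
    have hbh : f b i < h i := lt_of_not_ge fun hc => h3 ⟨hiκ, hc⟩
    have hfb : f b i ≤ g i := by
      rw [hgdef]
      simp only [if_pos hi]
      have := Ordinal.le_bsup
        (fun ε (_ : ε < δ.cof.ord) => if f (fseq δ ε) i < h i then f (fseq δ ε) i else 0)
        (ν + 1) hν1
      rwa [if_pos hbh] at this
    exact absurd (hfb.trans_lt (hga.trans hba)) (lt_irrefl _)
  -- Claim A : for regular κ < χ < δ.cof, coordinates of cofinality χ form a J-set
  have hA : ∀ χ : Cardinal, κ < χ → χ < δ.cof → χ.IsRegular →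
      {i | i < κ.ord ∧ (h i).cof = χ} ∈ J := by
    intro χ hκχ hχσ hχreg
    set T := {i | i < κ.ord ∧ (h i).cof = χ} with hTdef
    have hχord : ∀ i ∈ T, (h i).cof.ord = χ.ord := fun i hi => by rw [hi.2]
    have hχolim : Order.IsSuccLimit χ.ord := Cardinal.isSuccLimit_ord (hκω.trans hκχ.le)
    set C : Ordinal → Ordinal → Ordinal := fun ν i => if i ∈ T then fseq (h i) ν else 0
      with hCdef
    have hC_lt : ∀ ν < χ.ord, ∀ i ∈ T, C ν i < h i := by
      intro ν hν i hi
      rw [hCdef]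
      simp only [if_pos hi]
      exact fseq_lt (h i) (by rw [hχord i hi]; exact hν)
    have hCh : ∀ ν < χ.ord, ltMod κ.ord J (C ν) h := by
      intro ν hν
      refine hJ.mono _ hJ0 _ ?_
      rintro i ⟨hiκ, hile⟩
      by_cases hiT : i ∈ T
      · exact absurd hile (hC_lt ν hν i hiT).not_ge
      · refine ⟨hiκ, ?_⟩
        rw [hCdef] at hile
        simp only [if_neg hiT] at hile
        rw [nonpos_iff_eq_zero.1 hile]
        exact zero_le
    have hch : ∀ ν : Ordinal, ∃ a, ν < χ.ord → a < δ ∧ ltMod κ.ord J (C ν) (f a) := by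
      intro ν
      by_cases hν : ν < χ.ord
      · obtain ⟨a, ha1, ha2⟩ := heubB (C ν) (hCh ν hν)
        exact ⟨a, fun _ => ⟨ha1, ha2⟩⟩
      · exact ⟨0, fun hc => absurd hc hν⟩
    choose af haf using hch
    have hB0 : Ordinal.bsup χ.ord (fun ν _ => af ν) < δ :=
      Ordinal.bsup_lt_ord (by rw [Cardinal.card_ord]; exact hχσ) fun ν hν => (haf ν hν).1
    set b := Ordinal.bsup χ.ord (fun ν _ => af ν) + 1 with hbdef
    have hbδ : b < δ := by
      rw [hbdef, Ordinal.add_one_eq_succ]; exact hδlim.succ_lt hB0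
    have hG : ∀ ν < χ.ord, {i | i < κ.ord ∧ f b i ≤ C ν i} ∈ J := by
      intro ν hν
      have h1 := (haf ν hν).2
      have hafb : af ν < b := (Ordinal.le_bsup (fun ν _ => af ν) ν hν).trans_lt (hsucc1 _)
      have h2 : {i | i < κ.ord ∧ f b i ≤ f (af ν) i} ∈ J := hIncJ _ _ (haf ν hν).1 hbδ hafb
      refine hJ.mono _ (hJ.union_mem _ h2 _ h1) _ ?_
      rintro i ⟨hiκ, hile⟩
      by_cases hc : f (af ν) i ≤ C ν i
      · exact Or.inr ⟨hiκ, hc⟩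
      · exact Or.inl ⟨hiκ, hile.trans (lt_of_not_ge hc).le⟩
    have hνch : ∀ i : Ordinal, ∃ ν, (i ∈ T ∧ f b i < h i) →
        ν < χ.ord ∧ f b i ≤ fseq (h i) ν := by
      intro i
      by_cases hc : i ∈ T ∧ f b i < h i
      · obtain ⟨ν, hν, hle⟩ := exists_fseq_ge (h i) hc.2
        exact ⟨ν, fun _ => ⟨(hχord i hc.1) ▸ hν, hle⟩⟩
      · exact ⟨0, fun hcc => absurd hcc hc⟩
    choose νg hνg using hνch
    set ν₀ := Ordinal.bsup κ.ord (fun i _ => if i ∈ T ∧ f b i < h i then νg i else 0)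
      with hν₀def
    have hν₀ : ν₀ < χ.ord := by
      rw [hν₀def]
      apply Ordinal.bsup_lt_ord
      · rw [Cardinal.card_ord, hχreg.cof_eq]; exact hκχ
      · intro i hi
        by_cases hc : i ∈ T ∧ f b i < h i
        · rw [if_pos hc]; exact (hνg i hc).1
        · rw [if_neg hc]; exact hχolim.pos
    refine hJ.mono _ (hJ.union_mem _ (heubA b hbδ) _ (hG ν₀ hν₀)) _ ?_
    intro i hiT
    by_cases hc : h i ≤ f b i
    · exact Or.inl ⟨hiT.1, hc⟩
    · have hc2 : i ∈ T ∧ f b i < h i := ⟨hiT, lt_of_not_ge hc⟩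
      obtain ⟨hνa, hνb⟩ := hνg i hc2
      have hνle : νg i ≤ ν₀ := by
        have := Ordinal.le_bsup (fun i (_ : i < κ.ord) =>
          if i ∈ T ∧ f b i < h i then νg i else 0) i hiT.1
        rwa [if_pos hc2] at this
      refine Or.inr ⟨hiT.1, hνb.trans ?_⟩
      have hm : fseq (h i) (νg i) ≤ fseq (h i) ν₀ := by
        apply fseq_mono (h i) _ _ hνle <;> rw [hχord i hiT]
        · exact hνa
        · exact hν₀
      refine hm.trans ?_
      rw [hCdef]
      simp only [if_pos hiT]
      exact le_rfl
  -- Claim: coordinates with κ < cofinality < δ.cof form a J-set, by θ-completeness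
  have hZ2 : {i | i < κ.ord ∧ κ < (h i).cof ∧ (h i).cof < δ.cof} ∈ J := by
    set R : Set Cardinal := {χ | κ < χ ∧ χ < δ.cof ∧ χ.IsRegular} with hRdef
    set S : Set (Set Ordinal) := (fun χ => {i | i < κ.ord ∧ (h i).cof = χ}) '' R with hSdef
    have hSJ : S ⊆ J := by
      rintro _ ⟨χ, hχ, rfl⟩
      exact hA χ hχ.1 hχ.2.1 hχ.2.2
    have hSsub : {i | i < κ.ord ∧ κ < (h i).cof ∧ (h i).cof < δ.cof} ⊆ ⋃₀ S := by
      rintro i ⟨hiκ, hi1, hi2⟩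
      have hlim : Order.IsSuccLimit (h i) := Ordinal.aleph0_le_cof.1 (hκω.trans hi1.le)
      exact ⟨{j | j < κ.ord ∧ (h j).cof = (h i).cof},
        ⟨(h i).cof, ⟨hi1, hi2, Cardinal.isRegular_cof hlim⟩, rfl⟩, ⟨hiκ, rfl⟩⟩
    obtain ⟨ξσ, hξσζ, hξσ⟩ := exists_eq_succIter (χ := κ) hcof1.le
      (show δ.cof < succIter κ ζ from hlamval ▸ hcof2)
    have hcard : #S < Cardinal.lift.{1,0} θ := by
      have h1 : #S ≤ #R := Cardinal.mk_image_le
      have hinj : ∀ χ : R, ∃ ξ, ξ < ξσ ∧ (χ : Cardinal) = succIter κ ξ := by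
        rintro ⟨χ, hχ1, hχ2, _⟩
        exact exists_eq_succIter hχ1.le (by rw [← hξσ]; exact hχ2)
      choose jf hjf1 hjf2 using hinj
      have h2 : #R ≤ #(Iio ξσ) := by
        refine Cardinal.mk_le_of_injective (f := fun χ : R => (⟨jf χ, hjf1 χ⟩ : Iio ξσ)) ?_
        intro χ1 χ2 heq
        apply Subtype.ext
        rw [hjf2 χ1, hjf2 χ2]
        congr 1
        exact congrArg Subtype.val heq
      have h3 : #(Iio ξσ) = Cardinal.lift.{1} ξσ.card := Ordinal.mk_Iio_ordinal ξσ
      have h4 : ξσ.card < θ := Cardinal.lt_ord.1 (hξσζ.trans_le hζθ)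
      calc #S ≤ #R := h1
        _ ≤ #(Iio ξσ) := h2
        _ = Cardinal.lift.{1} ξσ.card := h3
        _ < Cardinal.lift.{1,0} θ := Cardinal.lift_lt.2 h4
    exact hJ.mono _ (hcomp S hSJ hcard) _ hSsub
  -- the set of coordinates of the right cofinality
  set W := {i | i < κ.ord ∧ (h i).cof = δ.cof} with hWdef
  have hZ : Iio κ.ord \ W ∈ J := by
    refine hJ.mono _ (hJ.union_mem _ hsmall _ (hJ.union_mem _ hZ1 _ hZ2)) _ ?_
    rintro i ⟨hiκ, hiW⟩
    rcases le_or_gt (h i).cof κ with hc | hc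
    · exact Or.inl ⟨hiκ, hc⟩
    rcases lt_trichotomy (h i).cof δ.cof with hd | hd | hd
    · exact Or.inr (Or.inr ⟨hiκ, hc, hd⟩)
    · exact absurd ⟨hiκ, hd⟩ hiW
    · exact Or.inr (Or.inl ⟨hiκ, hd⟩)
  -- the coordinatewise fundamental sequences
  set e : Ordinal → Ordinal → Ordinal := fun ν i => if i ∈ W then fseq (h i) ν else 0
    with hedef
  have hWord : ∀ i ∈ W, (h i).cof.ord = δ.cof.ord := fun i hi => by rw [hi.2]
  have he_lt : ∀ ν < δ.cof.ord, ∀ i ∈ W, e ν i < h i := by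
    intro ν hν i hi
    rw [hedef]
    simp only [if_pos hi]
    exact fseq_lt (h i) (by rw [hWord i hi]; exact hν)
  have he_mono : ∀ ν ν' : Ordinal, ν ≤ ν' → ν' < δ.cof.ord → ∀ i ∈ W, e ν i ≤ e ν' i := by
    intro ν ν' hle hν' i hi
    rw [hedef]
    simp only [if_pos hi]
    apply fseq_mono (h i) _ _ hle <;> rw [hWord i hi]
    · exact hle.trans_lt hν'
    · exact hν'
  have heh : ∀ ν < δ.cof.ord, ltMod κ.ord J (e ν) h := by
    intro ν hν
    refine hJ.mono _ hZ _ ?_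
    rintro i ⟨hiκ, hile⟩
    by_cases hiW : i ∈ W
    · exact absurd hile (he_lt ν hν i hiW).not_ge
    · exact ⟨hiκ, hiW⟩
  have hbch : ∀ ν : Ordinal, ∃ a, ν < δ.cof.ord → a < δ ∧ ltMod κ.ord J (e ν) (f a) := by
    intro ν
    by_cases hν : ν < δ.cof.ord
    · obtain ⟨a, ha1, ha2⟩ := heubB (e ν) (heh ν hν)
      exact ⟨a, fun _ => ⟨ha1, ha2⟩⟩
    · exact ⟨0, fun hc => absurd hc hν⟩
  choose bf hbf using hbch
  have hνch : ∀ a : Ordinal, ∃ ν, a < δ →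
      (ν < δ.cof.ord ∧ ∀ i ∈ W, f a i < h i → f a i ≤ e ν i) := by
    intro a
    by_cases ha : a < δ
    · have hin : ∀ i : Ordinal, ∃ ν', (i ∈ W ∧ f a i < h i) →
          ν' < δ.cof.ord ∧ f a i ≤ fseq (h i) ν' := by
        intro i
        by_cases hc : i ∈ W ∧ f a i < h i
        · obtain ⟨ν', hν', hle⟩ := exists_fseq_ge (h i) hc.2
          exact ⟨ν', fun _ => ⟨(hWord i hc.1) ▸ hν', hle⟩⟩
        · exact ⟨0, fun hcc => absurd hcc hc⟩
      choose νg hνg using hin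
      set ν := Ordinal.bsup κ.ord (fun i _ => if i ∈ W ∧ f a i < h i then νg i else 0)
        with hνdef
      have hν : ν < δ.cof.ord := by
        rw [hνdef]
        apply Ordinal.bsup_lt_ord
        · rw [Cardinal.card_ord, hσcof]; exact hcof1
        · intro i hi
          by_cases hc : i ∈ W ∧ f a i < h i
          · rw [if_pos hc]; exact (hνg i hc).1
          · rw [if_neg hc]; exact hσlim.pos
      refine ⟨ν, fun _ => ⟨hν, ?_⟩⟩
      intro i hiW hfa
      have hc : i ∈ W ∧ f a i < h i := ⟨hiW, hfa⟩
      have hνle : νg i ≤ ν := by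
        have := Ordinal.le_bsup (fun i (_ : i < κ.ord) =>
          if i ∈ W ∧ f a i < h i then νg i else 0) i hiW.1
        rwa [if_pos hc] at this
      refine (hνg i hc).2.trans ?_
      have hm : fseq (h i) (νg i) ≤ fseq (h i) ν := by
        apply fseq_mono (h i) _ _ hνle <;> rw [hWord i hiW]
        · exact (hνg i hc).1
        · exact hν
      refine hm.trans ?_
      rw [hedef]
      simp only [if_pos hiW]
      exact le_rfl
    · exact ⟨0, fun hc => absurd hc ha⟩
  choose νf hνf using hνch
  -- the master recursion producing the good-point witnessing club
  have hle_add_one : ∀ {x y : Ordinal}, x < y + 1 → x ≤ y := fun {x y} hxy => by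
    rw [Ordinal.add_one_eq_succ] at hxy; exact Order.lt_succ_iff.1 hxy
  set Dfun : Ordinal → Ordinal := recD (fun prev ε => (Ordinal.bsup ε fun ε' _ =>
      max (prev ε') (max (bf (Ordinal.bsup (ε' + 1) fun ε'' _ => νf (prev ε'')))
        (fseq δ ε'))) + 1) with hDdef
  set Nf : Ordinal → Ordinal := fun ε => Ordinal.bsup (ε + 1) fun ε'' _ => νf (Dfun ε'')
    with hNdef
  have hDeq : ∀ ε, Dfun ε = (Ordinal.bsup ε fun ε' _ =>
      max (Dfun ε') (max (bf (Nf ε')) (fseq δ ε'))) + 1 := by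
    intro ε
    conv_lhs => rw [hDdef, recD_eq, ← hDdef]
    congr 1
    apply bsup_ext
    intro ε' hε'
    beta_reduce
    rw [if_pos hε']
    have heq : (Ordinal.bsup (ε' + 1) fun ε'' _ => νf (if ε'' < ε then Dfun ε'' else 0))
        = Nf ε' := by
      simp only [hNdef]
      apply bsup_ext
      intro ε'' hε''
      rw [if_pos ((hle_add_one hε'').trans_lt hε')]
    rw [heq]
  have hDN : ∀ ε, ε < δ.cof.ord → Dfun ε < δ ∧ Nf ε < δ.cof.ord := by
    intro ε
    induction ε using Ordinal.induction with
    | h ε IH =>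
      intro hε
      have hD : ∀ ε' < ε, Dfun ε' < δ := fun ε' hε' => (IH ε' hε' (hε'.trans hε)).1
      have hNlt : ∀ ε' < ε, Nf ε' < δ.cof.ord := fun ε' hε' => (IH ε' hε' (hε'.trans hε)).2
      have hDε : Dfun ε < δ := by
        rw [hDeq ε, Ordinal.add_one_eq_succ]
        apply hδlim.succ_lt
        apply Ordinal.bsup_lt_ord (Cardinal.lt_ord.1 hε)
        intro ε' hε'
        apply max_lt (hD ε' hε') (max_lt ?_ ?_)
        · exact (hbf (Nf ε') (hNlt ε' hε')).1
        · exact fseq_lt δ (hε'.trans hε)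
      refine ⟨hDε, ?_⟩
      simp only [hNdef]
      apply Ordinal.bsup_lt_ord (by rw [hσcof]; exact Cardinal.lt_ord.1 (hsuccσ hε))
      intro ε'' hε''
      have hDε'' : Dfun ε'' < δ := by
        rcases lt_or_eq_of_le (hle_add_one hε'') with hlt | rfl
        · exact hD ε'' hlt
        · exact hDε
      exact (hνf (Dfun ε'') hDε'').1
  have hDD : ∀ ε' ε : Ordinal, ε' < ε → Dfun ε' < Dfun ε := by
    intro ε' ε hlt
    rw [hDeq ε]
    exact (le_trans (le_max_left _ _) (Ordinal.le_bsup _ ε' hlt)).trans_lt (hsucc1 _)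
  have hbfD : ∀ ε' ε : Ordinal, ε' < ε → bf (Nf ε') < Dfun ε := by
    intro ε' ε hlt
    rw [hDeq ε]
    exact (le_trans ((le_max_left _ _).trans (le_max_right _ _))
      (Ordinal.le_bsup _ ε' hlt)).trans_lt (hsucc1 _)
  have hfδD : ∀ ε' ε : Ordinal, ε' < ε → fseq δ ε' < Dfun ε := by
    intro ε' ε hlt
    rw [hDeq ε]
    exact (le_trans ((le_max_right _ _).trans (le_max_right _ _))
      (Ordinal.le_bsup _ ε' hlt)).trans_lt (hsucc1 _)
  have hNmono : ∀ ε' ε : Ordinal, ε' ≤ ε → Nf ε' ≤ Nf ε := by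
    intro ε' ε hle
    simp only [hNdef]
    apply Ordinal.bsup_le
    intro ε'' hε''
    refine Ordinal.le_bsup _ ε'' (hε''.trans_le ?_)
    rw [Ordinal.add_one_eq_succ, Ordinal.add_one_eq_succ]
    exact Order.succ_le_succ hle
  have hNν : ∀ ε : Ordinal, νf (Dfun ε) ≤ Nf ε := by
    intro ε
    simp only [hNdef]
    exact Ordinal.le_bsup _ ε (hsucc1 ε)
  -- assemble the good point witness
  refine ⟨(fun η => Dfun (η + 1)) '' Iio δ.cof.ord, ?_, ?_, ?_⟩
  · rintro _ ⟨η, hη, rfl⟩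
    exact (hDN _ (hsuccσ hη)).1
  · intro γ hγ
    obtain ⟨ε, hε, hle⟩ := exists_fseq_ge δ hγ
    exact ⟨Dfun (ε + 1), ⟨ε, hε, rfl⟩, hle.trans_lt (hfδD ε (ε + 1) (hsucc1 ε))⟩
  · have hηch : ∀ γ : Ordinal, ∃ η, γ ∈ (fun η => Dfun (η + 1)) '' Iio δ.cof.ord →
        η < δ.cof.ord ∧ Dfun (η + 1) = γ := by
      intro γ
      by_cases hγ : γ ∈ (fun η => Dfun (η + 1)) '' Iio δ.cof.ord
      · obtain ⟨η, hη, heq⟩ := hγ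
        exact ⟨η, fun _ => ⟨hη, heq⟩⟩
      · exact ⟨0, fun hc => absurd hc hγ⟩
    choose ηf hηf using hηch
    refine ⟨fun γ => (Iio κ.ord \ W) ∪ ({i | i < κ.ord ∧ h i ≤ f γ i} ∪
      {i | i < κ.ord ∧ f γ i ≤ e (Nf (ηf γ)) i}), ?_, ?_⟩
    · intro γ hγA
      obtain ⟨hηδ, hDη⟩ := hηf γ hγA
      have hγδ : γ < δ := by rw [← hDη]; exact (hDN _ (hsuccσ hηδ)).1
      have hNη : Nf (ηf γ) < δ.cof.ord := (hDN _ hηδ).2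
      refine hJ.union_mem _ hZ _ (hJ.union_mem _ (heubA γ hγδ) _ ?_)
      have hbfη := hbf (Nf (ηf γ)) hNη
      have hblt : bf (Nf (ηf γ)) < γ := by
        conv_rhs => rw [← hDη]
        exact hbfD _ _ (hsucc1 _)
      have h2 : {i | i < κ.ord ∧ f γ i ≤ f (bf (Nf (ηf γ))) i} ∈ J :=
        hIncJ _ _ hbfη.1 hγδ hblt
      refine hJ.mono _ (hJ.union_mem _ h2 _ hbfη.2) _ ?_
      rintro i ⟨hiκ, hile⟩
      by_cases hc : f (bf (Nf (ηf γ))) i ≤ e (Nf (ηf γ)) i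
      · exact Or.inr ⟨hiκ, hc⟩
      · exact Or.inl ⟨hiκ, hile.trans (lt_of_not_ge hc).le⟩
    · intro i hiκ γ0 hγ0 γ1 hγ1 hlt hs0 hs1
      obtain ⟨hη0δ, hD0⟩ := hηf γ0 hγ0
      obtain ⟨hη1δ, hD1⟩ := hηf γ1 hγ1
      have hiW : i ∈ W := by
        by_contra hiW
        exact hs0 (Or.inl ⟨hiκ, hiW⟩)
      have h1 : f γ0 i < h i := lt_of_not_ge fun hc => hs0 (Or.inr (Or.inl ⟨hiκ, hc⟩))
      have h2 : e (Nf (ηf γ1)) i < f γ1 i :=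
        lt_of_not_ge fun hc => hs1 (Or.inr (Or.inr ⟨hiκ, hc⟩))
      have hγ0δ : γ0 < δ := by rw [← hD0]; exact (hDN _ (hsuccσ hη0δ)).1
      have h3 : f γ0 i ≤ e (νf γ0) i := (hνf γ0 hγ0δ).2 i hiW h1
      have hηlt : ηf γ0 + 1 ≤ ηf γ1 := by
        by_contra hcon
        push_neg at hcon
        have hle2 : ηf γ1 ≤ ηf γ0 := hle_add_one hcon
        have hge : γ1 ≤ γ0 := by
          rw [← hD0, ← hD1]
          rcases lt_or_eq_of_le hle2 with hlt2 | heq2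
          · refine (hDD _ _ ?_).le
            rw [Ordinal.add_one_eq_succ, Ordinal.add_one_eq_succ]
            exact Order.succ_lt_succ hlt2
          · rw [heq2]
        exact absurd hlt hge.not_gt
      have hν0Nν : νf γ0 ≤ Nf (ηf γ1) := by
        have he' : νf γ0 = νf (Dfun (ηf γ0 + 1)) := by rw [hD0]
        rw [he']
        exact (hNν (ηf γ0 + 1)).trans (hNmono _ _ hηlt)
      have hNη1 : Nf (ηf γ1) < δ.cof.ord := (hDN _ hη1δ).2
      have h5 : e (νf γ0) i ≤ e (Nf (ηf γ1)) i := he_mono _ _ hν0Nν hNη1 i hiW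
      exact (h3.trans h5).trans_lt h2
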